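/- Let Γ be a Shilla distance-regular graph with b(Γ) = b := k/a₃. Then b ≥ 2, and c₂ ≥ (2a₃ - b² + b + 2) / (b(b+1)). -/

import Mathlib

open Finset SimpleGraph

/-- `G` is a distance-regular graph with diameter `D` and intersection numbers
`b i`, `c i`, `a i` (so valency `k = b 0` and `a i = k - b i - c i`). -/
structure IsDRG {V : Type*} [Fintype V] (G : SimpleGraph V) (D : ℕ)
    (b c a : ℕ → ℕ) : Prop where
  connected : G.Connected
  le_diam : ∀ x y : V, G.dist x y ≤ D
  exists_diam : ∃ x y : V, G.dist x y = D
  card_b : ∀ i, i ≤ D → ∀ x y : V, G.dist x y = i →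
      Nat.card {z : V | G.Adj y z ∧ G.dist x z = i + 1} = b i
  card_c : ∀ i, i ≤ D → ∀ x y : V, G.dist x y = i →
      Nat.card {z : V | G.Adj y z ∧ G.dist x z = i - 1} = c i
  card_a : ∀ i, i ≤ D → ∀ x y : V, G.dist x y = i →
      Nat.card {z : V | G.Adj y z ∧ G.dist x z = i} = a i

/-- `θ` is an eigenvalue of the adjacency matrix of `G`. -/
def IsEig {V : Type*} [Fintype V] [DecidableEq V] (G : SimpleGraph V)
    [DecidableRel G.Adj] (θ : ℝ) : Prop :=
  ∃ v : V → ℝ, v ≠ 0 ∧ (G.adjMatrix ℝ).mulVec v = θ • v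

/-- `θ` is the second largest eigenvalue of `G` (`k` being the largest). -/
def IsSecondLargestEig {V : Type*} [Fintype V] [DecidableEq V] (G : SimpleGraph V)
    [DecidableRel G.Adj] (k θ : ℝ) : Prop :=
  IsEig G θ ∧ θ < k ∧ ∀ η : ℝ, IsEig G η → η ≠ k → η ≤ θ

/-- `θ` is the smallest eigenvalue of `G`. -/
def IsSmallestEig {V : Type*} [Fintype V] [DecidableEq V] (G : SimpleGraph V)
    [DecidableRel G.Adj] (θ : ℝ) : Prop :=
  IsEig G θ ∧ ∀ η : ℝ, IsEig G η → θ ≤ η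

/-- The multiplicity of `θ` as an eigenvalue of the adjacency matrix of `G`. -/
noncomputable def eigMult {V : Type*} [Fintype V] [DecidableEq V] (G : SimpleGraph V)
    [DecidableRel G.Adj] (θ : ℝ) : ℕ :=
  Module.finrank ℝ ↥(Module.End.eigenspace (Matrix.toLin' (G.adjMatrix ℝ)) θ)

/-- A Shilla distance-regular graph: diameter `3` and second largest eigenvalue `a 3`. -/
structure IsShilla {V : Type*} [Fintype V] [DecidableEq V] (G : SimpleGraph V)
    [DecidableRel G.Adj] (b c a : ℕ → ℕ) : Prop where
  drg : IsDRG G 3 b c a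
  second : IsSecondLargestEig G (b 0) ((a 3 : ℝ))



section Aux
variable {V : Type*} [Fintype V] [DecidableEq V] (G : SimpleGraph V) [DecidableRel G.Adj]

lemma natCard_filter (p : V → Prop) [DecidablePred p] :
    Nat.card {z : V | p z} = (univ.filter p).card := by
  simp [Nat.card_eq_fintype_card, Fintype.card_subtype]

lemma sum_nbr_swap (A : Finset V) (v : V → ℝ) :
    ∑ y ∈ A, ∑ z ∈ G.neighborFinset y, v z
      = ∑ z, ((A.filter (fun y => G.Adj y z)).card : ℝ) * v z := by
  have h1 : ∀ y : V, ∑ z ∈ G.neighborFinset y, v z = ∑ z, if G.Adj y z then v z else 0 := by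
    intro y
    rw [neighborFinset_eq_filter, sum_filter]
  simp_rw [h1]
  rw [Finset.sum_comm]
  refine Finset.sum_congr rfl fun z _ => ?_
  rw [← Finset.sum_filter, Finset.sum_const, nsmul_eq_mul]

lemma indep_greedy (d : ℕ) : ∀ (S : Finset V), (∀ y ∈ S, (S.filter (G.Adj y)).card ≤ d) →
    ∃ C ⊆ S, S.card ≤ C.card * (d+1) ∧ ∀ y ∈ C, ∀ z ∈ C, y ≠ z → ¬ G.Adj y z := by
  intro S
  induction S using Finset.strongInduction with
  | H S ih =>
    intro hS
    rcases S.eq_empty_or_nonempty with rfl | ⟨y, hy⟩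
    · exact ⟨∅, Finset.Subset.refl _, by simp, by simp⟩
    · set X : Finset V := insert y (S.filter (G.Adj y)) with hX
      set T : Finset V := S \ X with hT
      have hTS : T ⊂ S := by
        refine Finset.ssubset_iff_of_subset (Finset.sdiff_subset) |>.mpr ?_
        exact ⟨y, hy, by simp [hT, hX]⟩
      obtain ⟨C', hC'T, hC'card, hC'indep⟩ := ih T hTS (fun z hz => by
        refine le_trans (Finset.card_le_card ?_) (hS z (Finset.mem_sdiff.mp hz).1)
        exact Finset.filter_subset_filter _ Finset.sdiff_subset)
      have hyC' : y ∉ C' := fun h => by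
        have := hC'T h; rw [hT, Finset.mem_sdiff] at this
        exact this.2 (by simp [hX])
      refine ⟨insert y C', ?_, ?_, ?_⟩
      · intro z hz
        rcases Finset.mem_insert.mp hz with rfl | hz
        · exact hy
        · exact Finset.sdiff_subset (hC'T hz)
      · have hcardX : X.card ≤ d + 1 := by
          refine le_trans (Finset.card_insert_le _ _) ?_
          exact Nat.add_le_add_right (hS y hy) 1
        have h1 : S.card ≤ T.card + X.card := by
          rw [hT, Finset.card_sdiff_add_card]
          exact Finset.card_le_card (Finset.subset_union_left)
        rw [Finset.card_insert_of_notMem hyC']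
        calc S.card ≤ T.card + X.card := h1
          _ ≤ C'.card * (d+1) + (d+1) := Nat.add_le_add hC'card hcardX
          _ = (C'.card + 1) * (d+1) := by ring
      · intro u hu z hz hne hadj
        have memX : ∀ w, w ∈ C' → ¬ G.Adj y w := by
          intro w hw hyw
          have hwT := hC'T hw
          rw [hT, Finset.mem_sdiff] at hwT
          exact hwT.2 (by
            rw [hX]
            exact Finset.mem_insert_of_mem (Finset.mem_filter.mpr ⟨hwT.1, hyw⟩))
        rcases Finset.mem_insert.mp hu with rfl | hu
        · rcases Finset.mem_insert.mp hz with h1 | hz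
          · exact (hne h1.symm).elim
          · exact memX z hz hadj
        · rcases Finset.mem_insert.mp hz with h1 | hz
          · exact memX u hu (h1 ▸ G.adj_symm hadj)
          · exact hC'indep u hu z hz hne hadj

end Aux

set_option maxHeartbeats 1600000 in
/-- For a Shilla distance-regular graph with `b = b(Γ) = a₃ - a₁`, one has `b ≥ 2` and
`c₂ ≥ (2a₃ - b² + b + 2)/(b(b+1))`. -/
theorem stmt7 {V : Type*} [Fintype V] [DecidableEq V] (G : SimpleGraph V)
    [DecidableRel G.Adj] (b c a : ℕ → ℕ) (hG : IsShilla G b c a)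
    (β : ℤ) (hβ : β = (a 3 : ℤ) - a 1) :
    2 ≤ β ∧ (c 2 : ℚ) ≥ (2 * (a 3 : ℚ) - (β : ℚ) ^ 2 + β + 2) / ((β : ℚ) * (β + 1)) := by
  obtain ⟨hD, hsec⟩ := hG
  have hconn := hD.connected
  have hcb : ∀ i, i ≤ 3 → ∀ x y : V, G.dist x y = i →
      (univ.filter fun z => G.Adj y z ∧ G.dist x z = i + 1).card = b i := by
    intro i hi x y h
    rw [← natCard_filter]; exact hD.card_b i hi x y h
  have hcc : ∀ i, i ≤ 3 → ∀ x y : V, G.dist x y = i →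
      (univ.filter fun z => G.Adj y z ∧ G.dist x z = i - 1).card = c i := by
    intro i hi x y h
    rw [← natCard_filter]; exact hD.card_c i hi x y h
  have hca : ∀ i, i ≤ 3 → ∀ x y : V, G.dist x y = i →
      (univ.filter fun z => G.Adj y z ∧ G.dist x z = i).card = a i := by
    intro i hi x y h
    rw [← natCard_filter]; exact hD.card_a i hi x y h
  have hd1 : ∀ {y z : V}, G.Adj y z → G.dist y z = 1 := fun h =>
    (SimpleGraph.dist_eq_one_iff_adj).mpr h
  have hadjd : ∀ (x : V) {y z : V}, G.Adj y z → G.dist x z ≤ G.dist x y + 1 := by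
    intro x y z h
    calc G.dist x z ≤ G.dist x y + G.dist y z := hconn.dist_triangle
      _ = G.dist x y + 1 := by rw [hd1 h]
  have hdeg : ∀ x : V, (univ.filter (G.Adj x)).card = b 0 := by
    intro x
    rw [← hcb 0 (by norm_num) x x (SimpleGraph.dist_self)]
    congr 1
    apply Finset.filter_congr
    intro z _
    simp only [zero_add]
    exact ⟨fun h => ⟨h, hd1 h⟩, And.left⟩
  -- witnesses along a geodesic of length 3
  obtain ⟨x0, w0, hx0w0⟩ := hD.exists_diam
  obtain ⟨p, hp⟩ := SimpleGraph.exists_walk_of_dist_ne_zero (u := x0) (v := w0)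
    (by rw [hx0w0]; omega)
  rw [hx0w0] at hp
  obtain ⟨y1, hA1, y2, hA2, y3, hA3, hy3⟩ :
      ∃ y1, G.Adj x0 y1 ∧ ∃ y2, G.Adj y1 y2 ∧ ∃ y3, G.Adj y2 y3 ∧ y3 = w0 := by
    cases p with
    | nil => simp at hp
    | cons h1 p1 =>
      cases p1 with
      | nil => simp at hp
      | cons h2 p2 =>
        cases p2 with
        | nil => simp at hp
        | cons h3 p3 =>
          refine ⟨_, h1, _, h2, _, h3, ?_⟩
          simp only [SimpleGraph.Walk.length_cons] at hp
          have hlen : p3.length = 0 := by omega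
          exact SimpleGraph.Walk.eq_of_length_eq_zero hlen
  subst hy3
  have hdy1 : G.dist x0 y1 = 1 := hd1 hA1
  have hdy2 : G.dist x0 y2 = 2 := by
    have h1 := hadjd x0 hA2
    have h2 := hadjd x0 hA3
    omega
  have hb2pos : 1 ≤ b 2 := by
    rw [← hcb 2 (by norm_num) x0 y2 hdy2]
    refine Finset.card_pos.mpr ⟨y3, ?_⟩
    simp only [Finset.mem_filter, Finset.mem_univ, true_and]
    exact ⟨hA3, hx0w0⟩
  have hc2pos : 1 ≤ c 2 := by
    rw [← hcc 2 (by norm_num) x0 y2 hdy2]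
    refine Finset.card_pos.mpr ⟨y1, ?_⟩
    simp only [Finset.mem_filter, Finset.mem_univ, true_and]
    exact ⟨G.adj_symm hA2, hdy1⟩
  have hkpos : 1 ≤ b 0 := by
    rw [← hdeg x0]
    refine Finset.card_pos.mpr ⟨y1, ?_⟩
    simp [hA1]
  -- spectral identity via the eigenvector
  obtain ⟨⟨v, hv0, hveq⟩, -, -⟩ := hsec
  have hEig : ∀ y : V, ∑ z ∈ G.neighborFinset y, v z = (a 3 : ℝ) * v y := by
    intro y
    have := congrFun hveq y
    simpa using this
  have hmain : ∀ x : V,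
      (a 3 : ℝ) * ((a 3 : ℝ) * v x) = (b 0 : ℝ) * v x + (a 1 : ℝ) * ((a 3 : ℝ) * v x) := by
    intro x
    have hW0 : (univ.filter fun y => G.dist x y = 0) = {x} := by
      ext y
      simp only [Finset.mem_filter, Finset.mem_univ, true_and, Finset.mem_singleton]
      rw [hconn.dist_eq_zero_iff, eq_comm]
    have hW1set : (univ.filter fun y => G.dist x y = 1) = G.neighborFinset x := by
      ext y
      simp [SimpleGraph.mem_neighborFinset, SimpleGraph.dist_eq_one_iff_adj]
    set W1 : ℝ := ∑ y ∈ univ.filter (fun y => G.dist x y = 1), v y with hW1def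
    set W2 : ℝ := ∑ y ∈ univ.filter (fun y => G.dist x y = 2), v y with hW2def
    set W3 : ℝ := ∑ y ∈ univ.filter (fun y => G.dist x y = 3), v y with hW3def
    have hclass : ∀ i : ℕ,
        ∑ y ∈ univ.filter (fun y => G.dist x y = i), ((a 3 : ℝ) * v y)
          = ∑ z, (((univ.filter fun y => G.Adj z y ∧ G.dist x y = i).card : ℝ)) * v z := by
      intro i
      have h1 : ∀ y ∈ univ.filter (fun y => G.dist x y = i),
          (a 3 : ℝ) * v y = ∑ z ∈ G.neighborFinset y, v z := fun y _ => (hEig y).symm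
      rw [Finset.sum_congr rfl h1, sum_nbr_swap]
      refine Finset.sum_congr rfl fun z _ => ?_
      congr 2
      rw [Finset.filter_filter]
      refine congrArg Finset.card (Finset.filter_congr fun y _ => ?_)
      exact ⟨fun h => ⟨h.2.symm, h.1⟩, fun h => ⟨h.2, h.1.symm⟩⟩
    have hcard3 : ∀ z : V, (univ.filter fun y => G.Adj z y ∧ G.dist x y = 3).card
        = (if G.dist x z = 2 then b 2 else if G.dist x z = 3 then a 3 else 0) := by
      intro z
      have hle := hD.le_diam x z
      by_cases h2 : G.dist x z = 2
      · rw [if_pos h2]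
        have := hcb 2 (by norm_num) x z h2
        simpa using this
      · rw [if_neg h2]
        by_cases h3 : G.dist x z = 3
        · rw [if_pos h3]; exact hca 3 (by norm_num) x z h3
        · rw [if_neg h3]
          rw [Finset.card_eq_zero, Finset.filter_eq_empty_iff]
          intro y _
          rintro ⟨hadj, hdy⟩
          have := hadjd x (G.adj_symm hadj)
          have := hadjd x hadj
          omega
    have hcard1 : ∀ z : V, (univ.filter fun y => G.Adj z y ∧ G.dist x y = 1).card
        = (if G.dist x z = 0 then b 0 else if G.dist x z = 1 then a 1
            else if G.dist x z = 2 then c 2 else 0) := by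
      intro z
      have hle := hD.le_diam x z
      by_cases h0 : G.dist x z = 0
      · rw [if_pos h0]
        have := hcb 0 (by norm_num) x z h0
        simpa using this
      · rw [if_neg h0]
        by_cases h1 : G.dist x z = 1
        · rw [if_pos h1]; exact hca 1 (by norm_num) x z h1
        · rw [if_neg h1]
          by_cases h2 : G.dist x z = 2
          · rw [if_pos h2]
            have := hcc 2 (by norm_num) x z h2
            simpa using this
          · rw [if_neg h2]
            rw [Finset.card_eq_zero, Finset.filter_eq_empty_iff]
            intro y _
            rintro ⟨hadj, hdy⟩
            have := hadjd x (G.adj_symm hadj)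
            have := hadjd x hadj
            omega
    have heq3 : (a 3 : ℝ) * W3 = (b 2 : ℝ) * W2 + (a 3 : ℝ) * W3 := by
      have h := hclass 3
      rw [← Finset.mul_sum] at h
      have hsplit : ∀ z ∈ (univ : Finset V),
          ((univ.filter fun y => G.Adj z y ∧ G.dist x y = 3).card : ℝ) * v z
            = (if G.dist x z = 2 then (b 2 : ℝ) * v z else 0)
              + (if G.dist x z = 3 then (a 3 : ℝ) * v z else 0) := by
        intro z _
        rw [hcard3 z]
        split_ifs with h2 h3
        · omega
        · push_cast; ring
        · push_cast; ring
        · push_cast; ring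
      rw [Finset.sum_congr rfl hsplit, Finset.sum_add_distrib,
        ← Finset.sum_filter, ← Finset.sum_filter, ← Finset.mul_sum, ← Finset.mul_sum] at h
      exact h
    have heq1 : (a 3 : ℝ) * W1 = (b 0 : ℝ) * v x + (a 1 : ℝ) * W1 + (c 2 : ℝ) * W2 := by
      have h := hclass 1
      rw [← Finset.mul_sum] at h
      have hsplit : ∀ z ∈ (univ : Finset V),
          ((univ.filter fun y => G.Adj z y ∧ G.dist x y = 1).card : ℝ) * v z
            = (if G.dist x z = 0 then (b 0 : ℝ) * v z else 0)
              + ((if G.dist x z = 1 then (a 1 : ℝ) * v z else 0)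
              + (if G.dist x z = 2 then (c 2 : ℝ) * v z else 0)) := by
        intro z _
        rw [hcard1 z]
        split_ifs <;> first | omega | (push_cast; ring)
      rw [Finset.sum_congr rfl hsplit, Finset.sum_add_distrib, Finset.sum_add_distrib,
        ← Finset.sum_filter, ← Finset.sum_filter, ← Finset.sum_filter,
        ← Finset.mul_sum, ← Finset.mul_sum, ← Finset.mul_sum, hW0,
        Finset.sum_singleton] at h
      linarith [h]
    have heq0 : W1 = (a 3 : ℝ) * v x := by
      rw [hW1def, hW1set, hEig x]
    have hW2zero : W2 = 0 := by
      have h0 : (b 2 : ℝ) * W2 = 0 := by linarith [heq3]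
      have hb2 : (b 2 : ℝ) ≠ 0 := by
        have : (1 : ℝ) ≤ (b 2 : ℝ) := by exact_mod_cast hb2pos
        linarith
      rcases mul_eq_zero.mp h0 with h | h
      · exact absurd h hb2
      · exact h
    rw [heq0, hW2zero] at heq1
    linarith [heq1]
  obtain ⟨x, hx⟩ := Function.ne_iff.mp hv0
  have hkreal : (a 3 : ℝ) * a 3 = (b 0 : ℝ) + (a 1 : ℝ) * a 3 := by
    have h := hmain x
    have h2 : ((a 3 : ℝ) * a 3) * v x = ((b 0 : ℝ) + (a 1 : ℝ) * a 3) * v x := by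
      ring_nf
      ring_nf at h
      linarith
    exact mul_right_cancel₀ hx h2
  have ha3pos : 1 ≤ a 3 := by
    by_contra h
    have h0 : a 3 = 0 := by omega
    have h0r : (a 3 : ℝ) = 0 := by exact_mod_cast h0
    rw [h0r] at hkreal
    have : (b 0 : ℝ) = 0 := by linarith
    have : b 0 = 0 := by exact_mod_cast this
    omega
  have ha1lt : a 1 < a 3 := by
    by_contra h
    push_neg at h
    have h1 : (a 3 : ℝ) ≤ (a 1 : ℝ) := by exact_mod_cast h
    have h2 : (0 : ℝ) ≤ (a 3 : ℝ) := by positivity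
    have h3 : (1 : ℝ) ≤ (b 0 : ℝ) := by exact_mod_cast hkpos
    nlinarith
  set nβ := a 3 - a 1 with hnbdef
  have hnb : a 1 + nβ = a 3 := by omega
  have e4 : (nβ : ℝ) = (a 3 : ℝ) - (a 1 : ℝ) := by
    rw [hnbdef]; exact Nat.cast_sub ha1lt.le
  have hk : b 0 = nβ * a 3 := by
    have h : (b 0 : ℝ) = ((nβ * a 3 : ℕ) : ℝ) := by
      push_cast
      rw [e4]
      nlinarith [hkreal]
    exact_mod_cast h
  have hβn : β = (nβ : ℤ) := by
    rw [hβ, hnbdef]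
    have := ha1lt
    omega
  -- nβ ≥ 2
  have hnb2 : 2 ≤ nβ := by
    rcases Nat.lt_or_ge nβ 2 with hlt | hge
    swap
    · exact hge
    exfalso
    have hnb1 : nβ = 1 := by omega
    have hka : b 0 = a 3 := by rw [hk, hnb1, one_mul]
    have hA1card : (univ.filter fun z => G.Adj y1 z ∧ G.dist x0 z = 1).card = a 1 :=
      hca 1 (by norm_num) x0 y1 hdy1
    set A1 := univ.filter fun z => G.Adj y1 z ∧ G.dist x0 z = 1 with hA1def
    have hx0ney2 : x0 ≠ y2 := by
      intro h
      rw [← h, SimpleGraph.dist_self] at hdy2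
      omega
    have hy2A1 : y2 ∉ A1 := by
      rw [hA1def, Finset.mem_filter]
      rintro ⟨-, -, h⟩
      omega
    have hx0A1 : x0 ∉ insert y2 A1 := by
      rw [Finset.mem_insert]
      rintro (h | h)
      · exact hx0ney2 h
      · rw [hA1def, Finset.mem_filter] at h
        obtain ⟨-, -, h⟩ := h
        rw [SimpleGraph.dist_self] at h
        omega
    have hsub : insert x0 (insert y2 A1) ⊆ univ.filter (G.Adj y1) := by
      intro z hz
      simp only [Finset.mem_insert] at hz
      rcases hz with rfl | rfl | hz
      · simp [G.adj_symm hA1]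
      · simp [hA2]
      · rw [hA1def, Finset.mem_filter] at hz
        simp [hz.2.1]
    have hcard : a 1 + 2 ≤ b 0 := by
      have h1 := Finset.card_le_card hsub
      rw [hdeg y1, Finset.card_insert_of_notMem hx0A1,
        Finset.card_insert_of_notMem hy2A1, hA1card] at h1
      omega
    omega
  refine ⟨by rw [hβn]; exact_mod_cast hnb2, ?_⟩
  -- the co-clique and double counting
  set Δ := univ.filter (G.Adj x0) with hΔdef
  have hΔcard : Δ.card = b 0 := hdeg x0
  have hlocal : ∀ y ∈ Δ, (Δ.filter (G.Adj y)).card = a 1 := by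
    intro y hy
    rw [hΔdef, Finset.mem_filter] at hy
    have hdxy : G.dist x0 y = 1 := hd1 hy.2
    rw [← hca 1 (by norm_num) x0 y hdxy, hΔdef, Finset.filter_filter]
    congr 1
    apply Finset.filter_congr
    intro z _
    rw [SimpleGraph.dist_eq_one_iff_adj]
    tauto
  obtain ⟨C0, hC0sub, hC0card, hC0indep⟩ :=
    indep_greedy G (a 1) Δ (fun y hy => (hlocal y hy).le)
  have hklb : nβ * (a 1 + 1) + 1 ≤ b 0 := by
    have h1 : a 1 + 2 ≤ a 3 := by omega
    calc nβ * (a 1 + 1) + 1 ≤ nβ * (a 1 + 1) + nβ := by omega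
      _ = nβ * (a 1 + 2) := by ring
      _ ≤ nβ * a 3 := Nat.mul_le_mul_left _ h1
      _ = b 0 := hk.symm
  have hC0big : nβ + 1 ≤ C0.card := by
    by_contra h
    push_neg at h
    have h1 : C0.card ≤ nβ := by omega
    have h2 : C0.card * (a 1 + 1) ≤ nβ * (a 1 + 1) := Nat.mul_le_mul_right _ h1
    rw [hΔcard] at hC0card
    omega
  obtain ⟨C, hCsub0, hCcard⟩ := Finset.exists_subset_card_eq hC0big
  have hCsub : C ⊆ Δ := hCsub0.trans hC0sub
  have hCindep : ∀ y ∈ C, ∀ z ∈ C, y ≠ z → ¬ G.Adj y z :=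
    fun y hy z hz => hC0indep y (hCsub0 hy) z (hCsub0 hz)
  set D : V → Finset V := fun y => insert y (Δ.filter (G.Adj y)) with hDdef
  have hDcard : ∀ y ∈ C, (D y).card = a 1 + 1 := by
    intro y hy
    rw [hDdef]
    rw [Finset.card_insert_of_notMem (by
      rw [Finset.mem_filter]
      rintro ⟨-, h⟩
      exact G.irrefl h), hlocal y (hCsub hy)]
  have hDsub : ∀ y ∈ C, D y ⊆ Δ := by
    intro y hy
    rw [hDdef]
    exact Finset.insert_subset (hCsub hy) (Finset.filter_subset _ _)
  have hpair : ∀ q ∈ C.offDiag, (D q.1 ∩ D q.2).card + 1 ≤ c 2 := by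
    rintro ⟨y, y'⟩ hq
    simp only [Finset.mem_offDiag] at hq
    obtain ⟨hy, hy', hne⟩ := hq
    have hnadj : ¬ G.Adj y y' := hCindep y hy y' hy' hne
    have hxy : G.Adj x0 y := by
      have := hCsub hy; rw [hΔdef, Finset.mem_filter] at this; exact this.2
    have hxy' : G.Adj x0 y' := by
      have := hCsub hy'; rw [hΔdef, Finset.mem_filter] at this; exact this.2
    have hdyy' : G.dist y y' = 2 := by
      have h1 : G.dist y y' ≤ 2 := by
        have := hconn.dist_triangle (u := y) (v := x0) (w := y')
        have e1 : G.dist y x0 = 1 := hd1 (G.adj_symm hxy)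
        have e2 : G.dist x0 y' = 1 := hd1 hxy'
        omega
      have h2 : G.dist y y' ≠ 1 := fun h =>
        hnadj (SimpleGraph.dist_eq_one_iff_adj.mp h)
      have h3 : G.dist y y' ≠ 0 := by
        have := hconn.pos_dist_of_ne hne
        omega
      omega
    have hEcard : (univ.filter fun z => G.Adj y' z ∧ G.dist y z = 1).card = c 2 := by
      have := hcc 2 (by norm_num) y y' hdyy'
      simpa using this
    set E := univ.filter fun z => G.Adj y' z ∧ G.dist y z = 1 with hEdef
    have hx0E : x0 ∈ E := by
      rw [hEdef, Finset.mem_filter]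
      exact ⟨Finset.mem_univ _, G.adj_symm hxy', hd1 (G.adj_symm hxy)⟩
    have hx0D : x0 ∉ D y ∩ D y' := by
      rw [Finset.mem_inter, hDdef]
      rintro ⟨h1, -⟩
      simp only [Finset.mem_insert, Finset.mem_filter] at h1
      rcases h1 with rfl | ⟨hmem, -⟩
      · exact G.irrefl hxy
      · rw [hΔdef, Finset.mem_filter] at hmem
        exact G.irrefl hmem.2
    have hsubE : insert x0 (D y ∩ D y') ⊆ E := by
      intro z hz
      rcases Finset.mem_insert.mp hz with rfl | hz
      · exact hx0E
      rw [Finset.mem_inter] at hz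
      obtain ⟨h1, h2⟩ := hz
      rw [hDdef] at h1 h2
      simp only [Finset.mem_insert, Finset.mem_filter] at h1 h2
      rcases h1 with rfl | ⟨-, hadj1⟩
      · rcases h2 with h | ⟨-, hadj2⟩
        · exact absurd h hne
        · exact absurd (G.adj_symm hadj2) hnadj
      · rcases h2 with rfl | ⟨-, hadj2⟩
        · exact absurd hadj1 hnadj
        · rw [hEdef, Finset.mem_filter]
          exact ⟨Finset.mem_univ _, hadj2, hd1 hadj1⟩
    have h1 := Finset.card_le_card hsubE
    rw [Finset.card_insert_of_notMem hx0D, hEcard] at h1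
    exact h1
  -- double counting
  set f : V → ℕ := fun z => (C.filter (fun y => z ∈ D y)).card with hfdef
  have hS1 : ∑ z ∈ Δ, f z = (nβ + 1) * (a 1 + 1) := by
    have h1 : ∑ z ∈ Δ, f z = ∑ z ∈ Δ, ∑ y ∈ C, if z ∈ D y then 1 else 0 := by
      refine Finset.sum_congr rfl fun z _ => ?_
      rw [hfdef]
      exact Finset.card_filter _ _
    rw [h1, Finset.sum_comm]
    have h2 : ∀ y ∈ C, ∑ z ∈ Δ, (if z ∈ D y then 1 else 0) = a 1 + 1 := by
      intro y hy
      rw [← Finset.sum_filter, Finset.sum_const, smul_eq_mul, mul_one,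
        Finset.filter_mem_eq_inter, Finset.inter_eq_right.mpr (hDsub y hy)]
      exact hDcard y hy
    rw [Finset.sum_congr rfl h2, Finset.sum_const, smul_eq_mul, hCcard]
  have hS2 : ∑ z ∈ Δ, f z * (f z - 1) ≤ (nβ + 1) * nβ * (c 2 - 1) := by
    have hsq : ∀ n : ℕ, n * n - n = n * (n - 1) := by
      intro n
      cases n with
      | zero => rfl
      | succ m => rw [Nat.succ_sub_one, Nat.mul_succ, Nat.add_sub_cancel]
    have hoff : ∀ z : V, (C.filter (fun y => z ∈ D y)).offDiag
        = C.offDiag.filter (fun q => z ∈ D q.1 ∧ z ∈ D q.2) := by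
      intro z
      ext q
      simp only [Finset.mem_offDiag, Finset.mem_filter]
      tauto
    have h1 : ∀ z ∈ Δ, f z * (f z - 1)
        = ∑ q ∈ C.offDiag, if z ∈ D q.1 ∧ z ∈ D q.2 then 1 else 0 := by
      intro z _
      rw [hfdef, ← hsq, ← Finset.offDiag_card, hoff]
      exact Finset.card_filter _ _
    rw [Finset.sum_congr rfl h1, Finset.sum_comm]
    have h2 : ∀ q ∈ C.offDiag, ∑ z ∈ Δ, (if z ∈ D q.1 ∧ z ∈ D q.2 then 1 else 0)
        ≤ c 2 - 1 := by
      intro q hq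
      rw [Finset.mem_offDiag] at hq
      have hsub1 : D q.1 ∩ D q.2 ⊆ Δ := fun z hz =>
        hDsub q.1 hq.1 (Finset.mem_inter.mp hz).1
      rw [← Finset.sum_filter, Finset.sum_const, smul_eq_mul, mul_one]
      have heq : Δ.filter (fun z => z ∈ D q.1 ∧ z ∈ D q.2) = D q.1 ∩ D q.2 := by
        ext z
        simp only [Finset.mem_filter, Finset.mem_inter]
        constructor
        · rintro ⟨-, h⟩; exact h
        · intro h; exact ⟨hsub1 (Finset.mem_inter.mpr h), h⟩
      rw [heq]
      have := hpair q (Finset.mem_offDiag.mpr hq)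
      omega
    calc ∑ q ∈ C.offDiag, ∑ z ∈ Δ, (if z ∈ D q.1 ∧ z ∈ D q.2 then 1 else 0)
        ≤ ∑ q ∈ C.offDiag, (c 2 - 1) := Finset.sum_le_sum h2
      _ = C.offDiag.card * (c 2 - 1) := by rw [Finset.sum_const, smul_eq_mul]
      _ = (nβ + 1) * nβ * (c 2 - 1) := by
          rw [Finset.offDiag_card, hCcard, hsq, Nat.add_sub_cancel]
  have hS3 : ∀ z ∈ Δ, 2 * f z ≤ 2 + f z * (f z - 1) := by
    intro z _
    rcases Nat.lt_or_ge (f z) 2 with h | h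
    · interval_cases (f z) <;> simp
    · have h1 : 2 * (f z - 1) ≤ f z * (f z - 1) := Nat.mul_le_mul_right _ h
      omega
  have HN : 2 * ((nβ + 1) * (a 1 + 1)) ≤ 2 * b 0 + (nβ + 1) * nβ * (c 2 - 1) := by
    calc 2 * ((nβ + 1) * (a 1 + 1)) = ∑ z ∈ Δ, 2 * f z := by
          rw [← Finset.mul_sum, hS1]
      _ ≤ ∑ z ∈ Δ, (2 + f z * (f z - 1)) := Finset.sum_le_sum hS3
      _ = 2 * Δ.card + ∑ z ∈ Δ, f z * (f z - 1) := by
          rw [Finset.sum_add_distrib, Finset.sum_const, smul_eq_mul, mul_comm]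
      _ ≤ 2 * b 0 + (nβ + 1) * nβ * (c 2 - 1) := by
          rw [hΔcard]
          exact Nat.add_le_add_left hS2 _
  -- final rational arithmetic
  have hbq : (β : ℚ) = (nβ : ℚ) := by exact_mod_cast congrArg (Int.cast : ℤ → ℚ) hβn
  have hbq2 : (2 : ℚ) ≤ (β : ℚ) := by rw [hbq]; exact_mod_cast hnb2
  rw [ge_iff_le, div_le_iff₀ (by nlinarith)]
  have e1 : (a 1 : ℚ) = (a 3 : ℚ) - (β : ℚ) := by
    rw [hbq]
    have : ((a 1 : ℕ) : ℚ) + ((nβ : ℕ) : ℚ) = ((a 3 : ℕ) : ℚ) := by exact_mod_cast hnb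
    linarith
  have e2 : (b 0 : ℚ) = (β : ℚ) * (a 3 : ℚ) := by
    rw [hbq]
    exact_mod_cast hk
  have e3 : ((c 2 - 1 : ℕ) : ℚ) = (c 2 : ℚ) - 1 := by
    have : (1 : ℕ) ≤ c 2 := hc2pos
    push_cast [Nat.cast_sub this]
    ring
  have HQ : 2 * (((nβ : ℚ) + 1) * ((a 1 : ℚ) + 1))
      ≤ 2 * (b 0 : ℚ) + ((nβ : ℚ) + 1) * (nβ : ℚ) * ((c 2 : ℚ) - 1) := by
    have := (Nat.cast_le (α := ℚ)).mpr HN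
    push_cast at this
    rw [e3] at this
    · convert this using 2 <;> push_cast <;> ring
  rw [← hbq] at HQ
  rw [e1] at HQ
  rw [e2] at HQ
  nlinarith [HQ, hbq2]
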